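/- Let ω be a nonzero element of the degree-2 component of the exterior algebra of ℝ⁴ (i.e. ω lies in the square of the submodule of the exterior algebra generated by the vectors). Then ω is simple (decomposable), i.e. ω = v ∧ w for some vectors v, w ∈ ℝ⁴, if and only if ω ∧ ω = 0. -/

import Mathlib

open ExteriorAlgebra

noncomputable section SimpleWedgeAux

/-- standard basis vectors of ℝ⁴ -/
def svA (i : Fin 4) : Fin 4 → ℝ := Pi.single i 1

/-- basis 1-vectors in the exterior algebra -/
noncomputable def eeA (i : Fin 4) : ExteriorAlgebra ℝ (Fin 4 → ℝ) := ι ℝ (svA i)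

lemma eeA_def (i : Fin 4) : ι ℝ (svA i) = eeA i := rfl

lemma swapL' (v w : Fin 4 → ℝ) (x : ExteriorAlgebra ℝ (Fin 4 → ℝ)) :
    ι ℝ w * (ι ℝ v * x) = -(ι ℝ v * (ι ℝ w * x)) := by
  rw [← mul_assoc, eq_neg_of_add_eq_zero_left (ι_add_mul_swap w v), neg_mul, mul_assoc]

lemma zzL' (v : Fin 4 → ℝ) (x : ExteriorAlgebra ℝ (Fin 4 → ℝ)) :
    ι ℝ v * (ι ℝ v * x) = 0 := by
  rw [← mul_assoc, ι_sq_zero, zero_mul]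

lemma eeA_swap (i j : Fin 4) : eeA j * eeA i = -(eeA i * eeA j) :=
  eq_neg_of_add_eq_zero_left (ι_add_mul_swap _ _)

lemma eeA_swapL (i j : Fin 4) (x : ExteriorAlgebra ℝ (Fin 4 → ℝ)) :
    eeA j * (eeA i * x) = -(eeA i * (eeA j * x)) := by
  rw [← mul_assoc, eeA_swap, neg_mul, mul_assoc]

lemma eeA_zz (i : Fin 4) : eeA i * eeA i = 0 := ι_sq_zero _

lemma eeA_zzL (i : Fin 4) (x : ExteriorAlgebra ℝ (Fin 4 → ℝ)) :
    eeA i * (eeA i * x) = 0 := by rw [← mul_assoc, eeA_zz, zero_mul]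

-- oriented swap lemmas
lemma sw10 : eeA 1 * eeA 0 = -(eeA 0 * eeA 1) := eeA_swap 0 1
lemma sw20 : eeA 2 * eeA 0 = -(eeA 0 * eeA 2) := eeA_swap 0 2
lemma sw30 : eeA 3 * eeA 0 = -(eeA 0 * eeA 3) := eeA_swap 0 3
lemma sw21 : eeA 2 * eeA 1 = -(eeA 1 * eeA 2) := eeA_swap 1 2
lemma sw31 : eeA 3 * eeA 1 = -(eeA 1 * eeA 3) := eeA_swap 1 3
lemma sw32 : eeA 3 * eeA 2 = -(eeA 2 * eeA 3) := eeA_swap 2 3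
lemma sw10L (x) : eeA 1 * (eeA 0 * x) = -(eeA 0 * (eeA 1 * x)) := eeA_swapL 0 1 x
lemma sw20L (x) : eeA 2 * (eeA 0 * x) = -(eeA 0 * (eeA 2 * x)) := eeA_swapL 0 2 x
lemma sw30L (x) : eeA 3 * (eeA 0 * x) = -(eeA 0 * (eeA 3 * x)) := eeA_swapL 0 3 x
lemma sw21L (x) : eeA 2 * (eeA 1 * x) = -(eeA 1 * (eeA 2 * x)) := eeA_swapL 1 2 x
lemma sw31L (x) : eeA 3 * (eeA 1 * x) = -(eeA 1 * (eeA 3 * x)) := eeA_swapL 1 3 x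
lemma sw32L (x) : eeA 3 * (eeA 2 * x) = -(eeA 2 * (eeA 3 * x)) := eeA_swapL 2 3 x

lemma vec_decompA (x : Fin 4 → ℝ) :
    x = x 0 • svA 0 + x 1 • svA 1 + x 2 • svA 2 + x 3 • svA 3 := by
  funext i; fin_cases i <;> simp [svA, Pi.single_apply]

lemma wedge_expandA (x0 x1 x2 x3 y0 y1 y2 y3 : ℝ) :
    ι ℝ (x0 • svA 0 + x1 • svA 1 + x2 • svA 2 + x3 • svA 3) *
      ι ℝ (y0 • svA 0 + y1 • svA 1 + y2 • svA 2 + y3 • svA 3) =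
    (x0*y1 - x1*y0) • (eeA 0 * eeA 1) + (x0*y2 - x2*y0) • (eeA 0 * eeA 2) +
      (x0*y3 - x3*y0) • (eeA 0 * eeA 3) + (x1*y2 - x2*y1) • (eeA 1 * eeA 2) +
      (x1*y3 - x3*y1) • (eeA 1 * eeA 3) + (x2*y3 - x3*y2) • (eeA 2 * eeA 3) := by
  simp only [map_add, map_smul, eeA_def, add_mul, mul_add, smul_mul_assoc, mul_smul_comm,
    eeA_zz, sw10, sw20, sw30, sw21, sw31, sw32, smul_neg, smul_zero]
  match_scalars <;> ring

/-- Every element of the degree-2 part is a combination of the six basis 2-vectors. -/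
lemma repr2A (ω : ExteriorAlgebra ℝ (Fin 4 → ℝ))
    (hω : ω ∈ (LinearMap.range (ExteriorAlgebra.ι ℝ (M := Fin 4 → ℝ)) ^ 2 :
      Submodule ℝ (ExteriorAlgebra ℝ (Fin 4 → ℝ)))) :
    ∃ a b c d e f : ℝ,
      ω = a • (eeA 0 * eeA 1) + b • (eeA 0 * eeA 2) + c • (eeA 0 * eeA 3) +
          d • (eeA 1 * eeA 2) + e • (eeA 1 * eeA 3) + f • (eeA 2 * eeA 3) := by
  rw [pow_two] at hω
  refine Submodule.mul_induction_on hω ?_ ?_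
  · rintro m ⟨x, rfl⟩ n ⟨y, rfl⟩
    refine ⟨x 0*y 1 - x 1*y 0, x 0*y 2 - x 2*y 0, x 0*y 3 - x 3*y 0,
      x 1*y 2 - x 2*y 1, x 1*y 3 - x 3*y 1, x 2*y 3 - x 3*y 2, ?_⟩
    conv_lhs => rw [vec_decompA x, vec_decompA y]
    exact wedge_expandA _ _ _ _ _ _ _ _
  · rintro u v ⟨a1,b1,c1,d1,e1,f1,rfl⟩ ⟨a2,b2,c2,d2,e2,f2,rfl⟩
    exact ⟨a1+a2, b1+b2, c1+c2, d1+d2, e1+e2, f1+f2, by module⟩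

/-- the family of alternating maps, nonzero only in degree 4 where it is `det`. -/
noncomputable def famA : ∀ i : ℕ, (Fin 4 → ℝ) [⋀^Fin i]→ₗ[ℝ] ℝ
  | 4 => Matrix.detRowAlternating
  | _ => 0

noncomputable def F4A : ExteriorAlgebra ℝ (Fin 4 → ℝ) →ₗ[ℝ] ℝ := liftAlternating famA

lemma F4A_prod (a b c d : Fin 4 → ℝ) :
    F4A (ι ℝ a * (ι ℝ b * (ι ℝ c * ι ℝ d))) = Matrix.det (Matrix.of ![a, b, c, d]) := by
  have h : ι ℝ a * (ι ℝ b * (ι ℝ c * ι ℝ d)) = ιMulti ℝ 4 ![a, b, c, d] := by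
    rw [ιMulti_apply]
    simp [List.ofFn_succ, mul_assoc]
  rw [h]
  exact liftAlternating_apply_ιMulti _ _

lemma F4A_E : F4A (eeA 0 * (eeA 1 * (eeA 2 * eeA 3))) = 1 := by
  have h := F4A_prod (svA 0) (svA 1) (svA 2) (svA 3)
  have hm : Matrix.of ![svA 0, svA 1, svA 2, svA 3] = (1 : Matrix (Fin 4) (Fin 4) ℝ) := by
    ext i j
    fin_cases i <;> fin_cases j <;>
      simp [svA, Matrix.one_apply, Pi.single_apply, Matrix.vecHead, Matrix.vecTail]
  rw [hm, Matrix.det_one] at h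
  exact h

lemma key_sqA (a b c d e f : ℝ) :
    (a • (eeA 0 * eeA 1) + b • (eeA 0 * eeA 2) + c • (eeA 0 * eeA 3) +
     d • (eeA 1 * eeA 2) + e • (eeA 1 * eeA 3) + f • (eeA 2 * eeA 3)) *
    (a • (eeA 0 * eeA 1) + b • (eeA 0 * eeA 2) + c • (eeA 0 * eeA 3) +
     d • (eeA 1 * eeA 2) + e • (eeA 1 * eeA 3) + f • (eeA 2 * eeA 3)) =
    (2*(a*f - b*e + c*d)) • (eeA 0 * (eeA 1 * (eeA 2 * eeA 3))) := by
  simp only [add_mul, mul_add, smul_mul_assoc, mul_smul_comm, smul_smul, mul_assoc,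
    sw10L, sw20L, sw30L, sw21L, sw31L, sw32L, sw10, sw20, sw30, sw21, sw31, sw32,
    eeA_zzL, eeA_zz, mul_neg, neg_neg, mul_zero, smul_neg, smul_zero, neg_zero,
    add_zero, zero_add]
  match_scalars <;> ring

end SimpleWedgeAux

/-- A nonzero 2-vector `ω` on `ℝ⁴` (an element of the degree-2 component of the
exterior algebra, i.e. of the square of the submodule generated by the vectors)
is simple (decomposable), i.e. `ω = v ∧ w` for some vectors `v, w : ℝ⁴`,
if and only if `ω ∧ ω = 0`. -/
theorem simple_iff_wedge_self_eq_zero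
    (ω : ExteriorAlgebra ℝ (Fin 4 → ℝ))
    (hω : ω ∈ (LinearMap.range (ExteriorAlgebra.ι ℝ (M := Fin 4 → ℝ)) ^ 2 :
      Submodule ℝ (ExteriorAlgebra ℝ (Fin 4 → ℝ))))
    (hne : ω ≠ 0) :
    (∃ v w : Fin 4 → ℝ,
        ω = ExteriorAlgebra.ι ℝ v * ExteriorAlgebra.ι ℝ w) ↔ ω * ω = 0 := by
  constructor
  · rintro ⟨v, w, rfl⟩
    rw [mul_assoc, swapL' v w, mul_neg, zzL', neg_zero]
  · intro h
    obtain ⟨a, b, c, d, e, f, rfl⟩ := repr2A ω hω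
    rw [key_sqA] at h
    have hF := congrArg F4A h
    rw [map_zero, map_smul, F4A_E, smul_eq_mul, mul_one] at hF
    have hPl : a*f - b*e + c*d = 0 := by linarith
    rcases eq_or_ne a 0 with ha | ha
    · rcases eq_or_ne b 0 with hb | hb
      · rcases eq_or_ne c 0 with hc | hc
        · rcases eq_or_ne d 0 with hd | hd
          · -- a=b=c=d=0
            refine ⟨(0:ℝ) • svA 0 + e • svA 1 + f • svA 2 + (0:ℝ) • svA 3,
              (0:ℝ) • svA 0 + (0:ℝ) • svA 1 + (0:ℝ) • svA 2 + (1:ℝ) • svA 3, ?_⟩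
            rw [wedge_expandA]
            subst ha hb hc hd
            match_scalars <;> ring
          · -- a=b=c=0, d≠0
            refine ⟨(0:ℝ) • svA 0 + (1:ℝ) • svA 1 + (0:ℝ) • svA 2 + (-(f/d)) • svA 3,
              (0:ℝ) • svA 0 + (0:ℝ) • svA 1 + d • svA 2 + e • svA 3, ?_⟩
            rw [wedge_expandA]
            subst ha hb hc
            match_scalars <;> field_simp <;> ring
        · -- a=b=0, c≠0
          refine ⟨(1:ℝ) • svA 0 + (e/c) • svA 1 + (f/c) • svA 2 + (0:ℝ) • svA 3,
            (0:ℝ) • svA 0 + (0:ℝ) • svA 1 + (0:ℝ) • svA 2 + c • svA 3, ?_⟩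
          rw [wedge_expandA]
          subst ha hb
          have hd : d = 0 := by
            have hcd : c * d = 0 := by linarith
            exact (mul_eq_zero.mp hcd).resolve_left hc
          subst hd
          match_scalars <;> field_simp <;> ring
      · -- a=0, b≠0
        refine ⟨(1:ℝ) • svA 0 + (d/b) • svA 1 + (0:ℝ) • svA 2 + (-(f/b)) • svA 3,
          (0:ℝ) • svA 0 + (0:ℝ) • svA 1 + b • svA 2 + c • svA 3, ?_⟩
        rw [wedge_expandA]
        subst ha
        match_scalars <;> field_simp
        all_goals linarith [hPl]
    · -- a≠0
      refine ⟨(1:ℝ) • svA 0 + (0:ℝ) • svA 1 + (-(d/a)) • svA 2 + (-(e/a)) • svA 3,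
        (0:ℝ) • svA 0 + a • svA 1 + b • svA 2 + c • svA 3, ?_⟩
      rw [wedge_expandA]
      match_scalars <;> field_simp
      · ring
      all_goals linarith [hPl]
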